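/- The Ricci tensor of the 3-dimensional example, defined by ρ(y, z) = trace of the linear map x ↦ R(x, y)z where R(x, y)z = ∇ₓ∇_y z - ∇_y∇ₓ z - ∇_{[x,y]} z, equals 2η⊗η (i.e. ρ(y, z) = 2η(y)η(z) for all y, z ∈ 𝔤), and the scalar curvature τ = ρ(e₁,e₁) - ρ(e₂,e₂) + ρ(e₃,e₃) equals 2. -/

import Mathlib

noncomputable section

/-- The underlying 3-dimensional real vector space. -/
abbrev V3 := Fin 3 → ℝ

/-- The basis `(e₁, e₂, e₃)` (standard basis of `ℝ³`). -/
def e3 (i : Fin 3) : V3 := Pi.single i 1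

/-- The Lie bracket: the bilinear extension of
`[e₃, e₁] = e₂`, `[e₃, e₂] = -e₁`, `[e₁, e₂] = 0`. -/
def br3 (x y : V3) : V3 :=
  ![x 1 * y 2 - x 2 * y 1, x 2 * y 0 - x 0 * y 2, 0]

/-- The B-metric `g`: `g(e₁,e₁) = 1`, `g(e₂,e₂) = -1`, `g(e₃,e₃) = 1`,
`g(eᵢ,eⱼ) = 0` for `i ≠ j`. -/
def gM3 (x y : V3) : ℝ := x 0 * y 0 - x 1 * y 1 + x 2 * y 2

/-- The structure endomorphism `φ`: `φe₁ = e₂`, `φe₂ = -e₁`, `φe₃ = 0`. -/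
def phi3 (x : V3) : V3 := ![-(x 1), x 0, 0]

/-- The Reeb vector field `ξ = e₃`. -/
def xi3 : V3 := e3 2

/-- The contact form `η`: `η(e₁) = η(e₂) = 0`, `η(e₃) = 1`. -/
def eta3 (x : V3) : ℝ := x 2

/-- The Koszul formula for the Levi-Civita connection of a left-invariant metric. -/
def Koszul3 (nabla : V3 → V3 → V3) : Prop :=
  ∀ x y z : V3,
    2 * gM3 (nabla x y) z = gM3 (br3 x y) z - gM3 (br3 y z) x + gM3 (br3 z x) y

/-- The curvature tensor `R(x,y)z = ∇ₓ∇_y z - ∇_y ∇ₓ z - ∇_{[x,y]} z`. -/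
def R3 (nabla : V3 → V3 → V3) (x y z : V3) : V3 :=
  nabla x (nabla y z) - nabla y (nabla x z) - nabla (br3 x y) z

/-- The Ricci tensor `ρ(y,z)`: the trace of the map `x ↦ R(x,y)z`,
computed in the standard basis. -/
def ric3 (nabla : V3 → V3 → V3) (y z : V3) : ℝ :=
  ∑ i : Fin 3, R3 nabla (e3 i) y z i


lemma nabla_explicit (nabla : V3 → V3 → V3) (hK : Koszul3 nabla) (x y : V3) :
    nabla x y = ![x 1 * y 2, -(x 0 * y 2), -(x 0 * y 1 + x 1 * y 0)] := by
  have h0 := hK x y (e3 0)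
  have h1 := hK x y (e3 1)
  have h2 := hK x y (e3 2)
  simp [gM3, br3, e3, Pi.single_apply] at h0 h1 h2
  funext i
  fin_cases i <;> simp <;> linarith

/-- The Ricci tensor of the 3-dimensional example equals `2 η⊗η`, and the scalar
curvature `τ = ρ(e₁,e₁) - ρ(e₂,e₂) + ρ(e₃,e₃)` equals `2`. -/
theorem ricci_3dim (nabla : V3 → V3 → V3) (hK : Koszul3 nabla) :
    (∀ y z : V3, ric3 nabla y z = 2 * eta3 y * eta3 z) ∧
    ric3 nabla (e3 0) (e3 0) - ric3 nabla (e3 1) (e3 1) + ric3 nabla (e3 2) (e3 2) = 2 := by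
  have hN := nabla_explicit nabla hK
  have key : ∀ y z : V3, ric3 nabla y z = 2 * eta3 y * eta3 z := by
    intro y z
    simp only [ric3, R3, hN, Fin.sum_univ_three, Pi.sub_apply, eta3, br3, e3,
      Pi.single_apply]
    norm_num [Matrix.cons_val_zero, Matrix.cons_val_one, Matrix.cons_val_two, Fin.ext_iff]
    ring
  refine ⟨key, ?_⟩
  simp [key, eta3, e3, Pi.single_apply]
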